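/- Under the setup, suppose: D₁ ≥ D₀ almost surely; for all d, z ∈ {0,1} the pair (Z, W) is conditionally independent of Y_{d,z} given (D₁, D₀); Z is conditionally independent of (D₁, D₀) given W; 0 < P(Z = z, W = w) < 1 for all z, w ∈ {0,1}; P(CP) > 0, P(CP | W = 1) > 0, P(CP ∩ {Z = z}) > 0 for z ∈ {0,1}; and the exclusion-type condition Y_{d,1} = Y_{d,0} almost surely for d ∈ {0,1} holds (so all average direct effects are zero). Then LATE = IV₁ := (E[Y | Z = 1, W = 1] − E[Y | Z = 0, W = 1]) / (E[D | Z = 1, W = 1] − E[D | Z = 0, W = 1]). -/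

import Mathlib

open MeasureTheory ProbabilityTheory

/-- `pr μ A` is the probability of the event `A`, as a real number. -/
noncomputable def pr {Ω : Type*} [MeasurableSpace Ω] (μ : Measure Ω) (A : Set Ω) : ℝ :=
  (μ A).toReal

/-- `prCond μ A B` is the conditional probability `P(A | B) = P(A ∩ B) / P(B)`. -/
noncomputable def prCond {Ω : Type*} [MeasurableSpace Ω] (μ : Measure Ω) (A B : Set Ω) : ℝ :=
  pr μ (A ∩ B) / pr μ B

/-- `cexp μ A f` is the conditional expectation `E[f | A]` of `f` given the event `A`. -/
noncomputable def cexp {Ω : Type*} [MeasurableSpace Ω] (μ : Measure Ω) (A : Set Ω)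
    (f : Ω → ℝ) : ℝ :=
  ∫ ω, f ω ∂(μ[|A])

/-- The event `{ω | f ω = c}`. -/
def evEq {Ω : Type*} (f : Ω → ℝ) (c : ℝ) : Set Ω := {ω | f ω = c}

/-- Always takers: `D₁ = D₀ = 1`. -/
def ATset {Ω : Type*} (D1 D0 : Ω → ℝ) : Set Ω := {ω | D1 ω = 1 ∧ D0 ω = 1}

/-- Never takers: `D₁ = D₀ = 0`. -/
def NTset {Ω : Type*} (D1 D0 : Ω → ℝ) : Set Ω := {ω | D1 ω = 0 ∧ D0 ω = 0}

/-- Compliers: `D₁ = 1`, `D₀ = 0`. -/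
def CPset {Ω : Type*} (D1 D0 : Ω → ℝ) : Set Ω := {ω | D1 ω = 1 ∧ D0 ω = 0}

section Helpers
variable {Ω : Type*} [MeasurableSpace Ω] {μ : Measure Ω}

lemma cexp_eq (A : Set Ω) (f : Ω → ℝ) :
    cexp μ A f = (μ A).toReal⁻¹ * ∫ ω in A, f ω ∂μ := by
  rw [cexp, ProbabilityTheory.cond, integral_smul_measure, ENNReal.toReal_inv, smul_eq_mul]

lemma integrable_cond [IsFiniteMeasure μ] {f : Ω → ℝ} (hf : Integrable f μ) (A : Set Ω) :
    Integrable f (μ[|A]) := by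
  rcases eq_or_ne (μ A) 0 with h | h
  · rw [ProbabilityTheory.cond, Measure.restrict_eq_zero.mpr h]
    simp [integrable_zero_measure]
  · exact (hf.restrict).smul_measure (by simp [h])

lemma key_prod [IsProbabilityMeasure μ] {ZW : Ω → ℝ × ℝ} (hZW : Measurable ZW) {f : Ω → ℝ}
    (hfi : Integrable f μ) {B : Set Ω} (hB : MeasurableSet B) (p : ℝ × ℝ)
    (hInd : IndepFun ZW f (μ[|B])) :
    ∫ ω in ZW ⁻¹' {p} ∩ B, f ω ∂μ = cexp μ B f * (μ (ZW ⁻¹' {p} ∩ B)).toReal := by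
  rcases eq_or_ne (μ B) 0 with h | h
  · have h0 : μ (ZW ⁻¹' {p} ∩ B) = 0 := measure_mono_null Set.inter_subset_right h
    rw [setIntegral_measure_zero _ h0, h0]
    simp
  · have hA : MeasurableSet (ZW ⁻¹' {p}) := hZW (measurableSet_singleton p)
    set ν := μ[|B] with hν
    have hprob : IsProbabilityMeasure ν := cond_isProbabilityMeasure h
    have hφ : Measurable (Set.indicator ({p} : Set (ℝ × ℝ)) (fun _ => (1:ℝ))) :=
      measurable_const.indicator (measurableSet_singleton p)
    have hcomp : (Set.indicator ({p} : Set (ℝ × ℝ)) (fun _ => (1:ℝ))) ∘ ZW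
        = (ZW ⁻¹' {p}).indicator (fun _ => (1:ℝ)) := by
      funext ω
      by_cases hmem : ZW ω ∈ ({p} : Set (ℝ × ℝ)) <;>
        simp [Set.indicator, Function.comp, hmem]
    have hind2 : IndepFun ((ZW ⁻¹' {p}).indicator (fun _ => (1:ℝ))) f ν := by
      rw [← hcomp]; exact hInd.comp hφ measurable_id
    have hfiν : Integrable f ν := integrable_cond hfi B
    have hmul := hind2.integral_mul_eq_mul_integral
      (measurable_const.indicator hA).aestronglyMeasurable hfiν.aestronglyMeasurable
    have hind_eq : ((ZW ⁻¹' {p}).indicator (fun _ => (1:ℝ))) * f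
        = (ZW ⁻¹' {p}).indicator f := by
      funext ω
      by_cases hmem : ω ∈ ZW ⁻¹' {p} <;> simp [Set.indicator, hmem]
    rw [hind_eq, integral_indicator hA,
      show ((ZW ⁻¹' {p}).indicator fun _ => (1:ℝ)) = (ZW ⁻¹' {p}).indicator (1 : Ω → ℝ) from rfl,
      integral_indicator_one hA] at hmul
    have hνA : ν (ZW ⁻¹' {p}) = (μ B)⁻¹ * μ (B ∩ ZW ⁻¹' {p}) := cond_apply hB μ _
    have hres : ∫ ω in ZW ⁻¹' {p}, f ω ∂ν
        = ((μ B)⁻¹).toReal * ∫ ω in ZW ⁻¹' {p} ∩ B, f ω ∂μ := by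
      rw [hν, ProbabilityTheory.cond, Measure.restrict_smul, integral_smul_measure,
        Measure.restrict_restrict hA, smul_eq_mul]
    have hb : (μ B).toReal ≠ 0 := ENNReal.toReal_ne_zero.mpr ⟨h, measure_ne_top μ B⟩
    have hcexp : cexp μ B f = ∫ ω, f ω ∂ν := rfl
    rw [hres, measureReal_def, hνA, ENNReal.toReal_mul, ENNReal.toReal_inv] at hmul
    have hset : μ (B ∩ ZW ⁻¹' {p}) = μ (ZW ⁻¹' {p} ∩ B) := by rw [Set.inter_comm]
    rw [hset] at hmul
    rw [hcexp]
    apply mul_left_cancel₀ (inv_ne_zero hb)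
    rw [hmul]; ring
end Helpers

section Helpers2
variable {Ω : Type*} [MeasurableSpace Ω] {μ : Measure Ω}

lemma split4 {g : Ω → ℝ} (hg : Integrable g μ) {A S1 S2 S3 S4 : Set Ω}
    (h2 : MeasurableSet (A ∩ S2)) (h3 : MeasurableSet (A ∩ S3)) (h4 : MeasurableSet (A ∩ S4))
    (d12 : Disjoint S1 S2) (d13 : Disjoint S1 S3) (d14 : Disjoint S1 S4)
    (d23 : Disjoint S2 S3) (d24 : Disjoint S2 S4) (d34 : Disjoint S3 S4)
    (hcov : S1 ∪ S2 ∪ S3 ∪ S4 = Set.univ) :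
    ∫ ω in A, g ω ∂μ = ∫ ω in A ∩ S1, g ω ∂μ + ∫ ω in A ∩ S2, g ω ∂μ
      + ∫ ω in A ∩ S3, g ω ∂μ + ∫ ω in A ∩ S4, g ω ∂μ := by
  have hAeq : A = ((A ∩ S1 ∪ A ∩ S2) ∪ A ∩ S3) ∪ A ∩ S4 := by
    rw [← Set.inter_union_distrib_left, ← Set.inter_union_distrib_left,
      ← Set.inter_union_distrib_left, hcov, Set.inter_univ]
  have m : ∀ S : Set Ω, Disjoint S1 S → Disjoint (A ∩ S1) (A ∩ S) :=
    fun S h => h.mono Set.inter_subset_right Set.inter_subset_right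
  have dA : Disjoint ((A ∩ S1 ∪ A ∩ S2) ∪ A ∩ S3) (A ∩ S4) :=
    Disjoint.union_left (Disjoint.union_left (m _ d14)
      (d24.mono Set.inter_subset_right Set.inter_subset_right))
      (d34.mono Set.inter_subset_right Set.inter_subset_right)
  have dB : Disjoint (A ∩ S1 ∪ A ∩ S2) (A ∩ S3) :=
    Disjoint.union_left (m _ d13)
      (d23.mono Set.inter_subset_right Set.inter_subset_right)
  conv_lhs => rw [hAeq]
  rw [setIntegral_union dA h4 hg.integrableOn hg.integrableOn,
    setIntegral_union dB h3 hg.integrableOn hg.integrableOn,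
    setIntegral_union (m _ d12) h2 hg.integrableOn hg.integrableOn]

lemma cond_indep_mul [IsProbabilityMeasure μ] {X : Ω → ℝ} {P : Ω → ℝ × ℝ}
    {Wset : Set Ω} (hW : MeasurableSet Wset)
    (hWne : μ Wset ≠ 0) (hInd : IndepFun X P (μ[|Wset])) (z : ℝ) (q : ℝ × ℝ) :
    pr μ (X ⁻¹' {z} ∩ P ⁻¹' {q} ∩ Wset) * pr μ Wset
      = pr μ (X ⁻¹' {z} ∩ Wset) * pr μ (P ⁻¹' {q} ∩ Wset) := by
  have h := hInd.measure_inter_preimage_eq_mul (μ := μ[|Wset]) (s := {z}) (t := {q})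
    (measurableSet_singleton _) (measurableSet_singleton _)
  rw [cond_apply hW, cond_apply hW, cond_apply hW] at h
  have hw : (μ Wset).toReal ≠ 0 := ENNReal.toReal_ne_zero.mpr ⟨hWne, measure_ne_top μ Wset⟩
  have htr := congrArg ENNReal.toReal h
  simp only [ENNReal.toReal_mul, ENNReal.toReal_inv] at htr
  have hs1 : Wset ∩ (X ⁻¹' {z} ∩ P ⁻¹' {q}) = X ⁻¹' {z} ∩ P ⁻¹' {q} ∩ Wset := by
    rw [Set.inter_comm]
  have hs2 : Wset ∩ X ⁻¹' {z} = X ⁻¹' {z} ∩ Wset := Set.inter_comm _ _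
  have hs3 : Wset ∩ P ⁻¹' {q} = P ⁻¹' {q} ∩ Wset := Set.inter_comm _ _
  rw [hs1, hs2, hs3] at htr
  have hwpos : 0 < (μ Wset).toReal := lt_of_le_of_ne ENNReal.toReal_nonneg (Ne.symm hw)
  field_simp at htr
  simp only [pr]
  linear_combination htr
end Helpers2

/-- under exclusion, the LATE equals the conditional Wald ratio `IV₁`. -/
theorem late_equals_IV1_under_exclusion
    {Ω : Type*} [MeasurableSpace Ω] (μ : Measure Ω) [IsProbabilityMeasure μ]
    (Y : Fin 2 → Fin 2 → Ω → ℝ) (D1 D0 Z W : Ω → ℝ)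
    (hYint : ∀ d z, Integrable (Y d z) μ) (hYmeas : ∀ d z, Measurable (Y d z))
    (hD1v : ∀ ω, D1 ω = 0 ∨ D1 ω = 1) (hD0v : ∀ ω, D0 ω = 0 ∨ D0 ω = 1)
    (hZv : ∀ ω, Z ω = 0 ∨ Z ω = 1) (hWv : ∀ ω, W ω = 0 ∨ W ω = 1)
    (hD1m : Measurable D1) (hD0m : Measurable D0) (hZm : Measurable Z) (hWm : Measurable W)
    (D : Ω → ℝ) (hD : ∀ ω, D ω = D1 ω * Z ω + D0 ω * (1 - Z ω))
    (Yo : Ω → ℝ)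
    (hYo : ∀ ω, Yo ω = (Y 1 1 ω * Z ω + Y 1 0 ω * (1 - Z ω)) * D ω
      + (Y 0 1 ω * Z ω + Y 0 0 ω * (1 - Z ω)) * (1 - D ω))
    (hmono : ∀ᵐ ω ∂μ, D0 ω ≤ D1 ω)
    (hCI1 : ∀ (d z : Fin 2) (i j : ℝ),
      IndepFun (fun ω => (Z ω, W ω)) (Y d z) (μ[|{ω | D1 ω = i ∧ D0 ω = j}]))
    (hCI2 : ∀ w' : ℝ, IndepFun Z (fun ω => (D1 ω, D0 ω)) (μ[|evEq W w']))
    (hpos : ∀ z w : ℝ, z = 0 ∨ z = 1 → w = 0 ∨ w = 1 →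
      0 < pr μ (evEq Z z ∩ evEq W w) ∧ pr μ (evEq Z z ∩ evEq W w) < 1)
    (hCP : 0 < pr μ (CPset D1 D0))
    (hCPW : 0 < prCond μ (CPset D1 D0) (evEq W 1))
    (hCPZ : ∀ z : ℝ, z = 0 ∨ z = 1 → 0 < pr μ (CPset D1 D0 ∩ evEq Z z))
    (hexcl : ∀ d : Fin 2, ∀ᵐ ω ∂μ, Y d 1 ω = Y d 0 ω) :
    cexp μ (CPset D1 D0)
        (fun ω => (Y 1 1 ω * Z ω + Y 1 0 ω * (1 - Z ω))
          - (Y 0 1 ω * Z ω + Y 0 0 ω * (1 - Z ω)))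
      = (cexp μ (evEq Z 1 ∩ evEq W 1) Yo - cexp μ (evEq Z 0 ∩ evEq W 1) Yo)
        / (cexp μ (evEq Z 1 ∩ evEq W 1) D - cexp μ (evEq Z 0 ∩ evEq W 1) D) := by
  classical
  set ZWp : Ω → ℝ × ℝ := fun ω => (Z ω, W ω) with hZWp
  set Pp : Ω → ℝ × ℝ := fun ω => (D1 ω, D0 ω) with hPp
  have hZWpm : Measurable ZWp := hZm.prodMk hWm
  have hPpm : Measurable Pp := hD1m.prodMk hD0m
  -- the four type sets
  set DFs : Set Ω := {ω | D1 ω = 0 ∧ D0 ω = 1} with hDFs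
  have hATpre : ATset D1 D0 = Pp ⁻¹' {((1:ℝ),(1:ℝ))} := by
    ext ω; simp [ATset, hPp, Prod.ext_iff]
  have hNTpre : NTset D1 D0 = Pp ⁻¹' {((0:ℝ),(0:ℝ))} := by
    ext ω; simp [NTset, hPp, Prod.ext_iff]
  have hCPpre : CPset D1 D0 = Pp ⁻¹' {((1:ℝ),(0:ℝ))} := by
    ext ω; simp [CPset, hPp, Prod.ext_iff]
  have hDFpre : DFs = Pp ⁻¹' {((0:ℝ),(1:ℝ))} := by
    ext ω; simp [hDFs, hPp, Prod.ext_iff]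
  have hATm : MeasurableSet (ATset D1 D0) := by
    rw [hATpre]; exact hPpm (measurableSet_singleton _)
  have hNTm : MeasurableSet (NTset D1 D0) := by
    rw [hNTpre]; exact hPpm (measurableSet_singleton _)
  have hCPm : MeasurableSet (CPset D1 D0) := by
    rw [hCPpre]; exact hPpm (measurableSet_singleton _)
  have hDFm : MeasurableSet DFs := by
    rw [hDFpre]; exact hPpm (measurableSet_singleton _)
  -- defier set is null
  have hDF0 : μ DFs = 0 := by
    refine measure_mono_null ?_ (ae_iff.mp hmono)
    rintro ω ⟨h1, h0⟩
    simp only [Set.mem_setOf_eq, h1, h0, not_le]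
    norm_num
  -- instrument events
  set A1 : Set Ω := ZWp ⁻¹' {((1:ℝ),(1:ℝ))} with hA1
  set A0 : Set Ω := ZWp ⁻¹' {((0:ℝ),(1:ℝ))} with hA0
  have hA1m : MeasurableSet A1 := hZWpm (measurableSet_singleton _)
  have hA0m : MeasurableSet A0 := hZWpm (measurableSet_singleton _)
  have hA1eq : evEq Z 1 ∩ evEq W 1 = A1 := by
    ext ω; simp [evEq, hA1, hZWp, Prod.ext_iff]
  have hA0eq : evEq Z 0 ∩ evEq W 1 = A0 := by
    ext ω; simp [evEq, hA0, hZWp, Prod.ext_iff]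
  have hW1m : MeasurableSet (evEq W 1) := by
    have : evEq W 1 = W ⁻¹' {(1:ℝ)} := by ext ω; simp [evEq]
    rw [this]; exact hWm (measurableSet_singleton _)
  -- basic positivity
  have hr1pos : 0 < (μ A1).toReal := by
    have := (hpos 1 1 (Or.inr rfl) (Or.inr rfl)).1
    rwa [pr, hA1eq] at this
  have hr0pos : 0 < (μ A0).toReal := by
    have := (hpos 0 1 (Or.inl rfl) (Or.inr rfl)).1
    rwa [pr, hA0eq] at this
  have hr1 : (μ A1).toReal ≠ 0 := ne_of_gt hr1pos
  have hr0 : (μ A0).toReal ≠ 0 := ne_of_gt hr0pos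
  have hA1subW : A1 ⊆ evEq W 1 := by
    intro ω hω
    have : (Z ω, W ω) = ((1:ℝ),(1:ℝ)) := hω
    simp [evEq]
    exact (Prod.ext_iff.mp this).2
  have hwpos : 0 < (μ (evEq W 1)).toReal := by
    refine lt_of_lt_of_le hr1pos (ENNReal.toReal_mono (measure_ne_top _ _) ?_)
    exact measure_mono hA1subW
  have hwne : (μ (evEq W 1)).toReal ≠ 0 := ne_of_gt hwpos
  have hWne : μ (evEq W 1) ≠ 0 := by
    intro h; rw [h] at hwpos; simp at hwpos
  -- disjointness and cover of type sets
  have dAN : Disjoint (ATset D1 D0) (NTset D1 D0) := by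
    rw [Set.disjoint_left]; rintro ω ⟨h1, _⟩ ⟨h1', _⟩
    exact one_ne_zero (h1 ▸ h1')
  have dAC : Disjoint (ATset D1 D0) (CPset D1 D0) := by
    rw [Set.disjoint_left]; rintro ω ⟨_, h0⟩ ⟨_, h0'⟩
    exact one_ne_zero (h0 ▸ h0')
  have dAD : Disjoint (ATset D1 D0) DFs := by
    rw [Set.disjoint_left]; rintro ω ⟨h1, _⟩ ⟨h1', _⟩
    exact one_ne_zero (h1 ▸ h1')
  have dNC : Disjoint (NTset D1 D0) (CPset D1 D0) := by
    rw [Set.disjoint_left]; rintro ω ⟨h1, _⟩ ⟨h1', _⟩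
    exact one_ne_zero (h1' ▸ h1)
  have dND : Disjoint (NTset D1 D0) DFs := by
    rw [Set.disjoint_left]; rintro ω ⟨_, h0⟩ ⟨_, h0'⟩
    exact one_ne_zero (h0' ▸ h0)
  have dCD : Disjoint (CPset D1 D0) DFs := by
    rw [Set.disjoint_left]; rintro ω ⟨h1, _⟩ ⟨h1', _⟩
    exact one_ne_zero (h1 ▸ h1')
  have hcov : ATset D1 D0 ∪ NTset D1 D0 ∪ CPset D1 D0 ∪ DFs = Set.univ := by
    ext ω
    simp only [Set.mem_union, Set.mem_univ, iff_true, ATset, NTset, CPset, hDFs,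
      Set.mem_setOf_eq]
    rcases hD1v ω with h1 | h1 <;> rcases hD0v ω with h0 | h0 <;> tauto
  -- measurability and integrability of D and Yo
  have hDmeq : D = fun ω => D1 ω * Z ω + D0 ω * (1 - Z ω) := funext hD
  have hDm' : Measurable D := by
    rw [hDmeq]; exact (hD1m.mul hZm).add (hD0m.mul (measurable_const.sub hZm))
  have hDi : Integrable D μ := by
    refine Integrable.mono' (integrable_const (1:ℝ)) hDm'.aestronglyMeasurable ?_
    filter_upwards with ω
    rcases hZv ω with hz | hz <;> rcases hD1v ω with h1 | h1 <;> rcases hD0v ω with h0 | h0 <;>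
      simp [hD ω, hz, h1, h0, Real.norm_eq_abs] <;> norm_num
  have hYom : Measurable Yo := by
    rw [funext hYo]
    exact ((((hYmeas 1 1).mul hZm).add ((hYmeas 1 0).mul (measurable_const.sub hZm))).mul
      hDm').add ((((hYmeas 0 1).mul hZm).add ((hYmeas 0 0).mul
      (measurable_const.sub hZm))).mul (measurable_const.sub hDm'))
  have hYoi : Integrable Yo μ := by
    refine Integrable.mono'
      (g := fun ω => |Y 1 1 ω| + |Y 1 0 ω| + |Y 0 1 ω| + |Y 0 0 ω|)
      ((((hYint 1 1).abs.add (hYint 1 0).abs).add ((hYint 0 1).abs)).add ((hYint 0 0).abs))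
      hYom.aestronglyMeasurable ?_
    filter_upwards with ω
    have a11 := abs_nonneg (Y 1 1 ω); have a10 := abs_nonneg (Y 1 0 ω)
    have a01 := abs_nonneg (Y 0 1 ω); have a00 := abs_nonneg (Y 0 0 ω)
    have l11 := le_abs_self (Y 1 1 ω); have l10 := le_abs_self (Y 1 0 ω)
    have l01 := le_abs_self (Y 0 1 ω); have l00 := le_abs_self (Y 0 0 ω)
    have n11 := neg_abs_le (Y 1 1 ω); have n10 := neg_abs_le (Y 1 0 ω)
    have n01 := neg_abs_le (Y 0 1 ω); have n00 := neg_abs_le (Y 0 0 ω)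
    rw [Real.norm_eq_abs, hYo ω, hD ω]
    rcases hZv ω with hz | hz <;> rcases hD1v ω with h1 | h1 <;> rcases hD0v ω with h0 | h0 <;>
      rw [hz, h1, h0] <;> rw [abs_le] <;> constructor <;> ring_nf <;> linarith

  -- membership helper
  have hmemA : ∀ (zz : ℝ) (ω : Ω), ω ∈ ZWp ⁻¹' {((zz:ℝ),(1:ℝ))} → Z ω = zz ∧ W ω = 1 := by
    intro zz ω h
    simpa [hZWp, Prod.ext_iff] using h
  -- generic piece computation for Yo
  have pieceYo : ∀ (zz : ℝ) (T : Set Ω), MeasurableSet T → ∀ (d : Fin 2),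
      IndepFun ZWp (Y d 0) (μ[|T]) →
      (∀ᵐ ω ∂μ, ω ∈ ZWp ⁻¹' {((zz:ℝ),(1:ℝ))} ∩ T → Yo ω = Y d 0 ω) →
      ∫ ω in ZWp ⁻¹' {((zz:ℝ),(1:ℝ))} ∩ T, Yo ω ∂μ
        = cexp μ T (Y d 0) * (μ (ZWp ⁻¹' {((zz:ℝ),(1:ℝ))} ∩ T)).toReal := by
    intro zz T hTm d hInd hcong
    rw [setIntegral_congr_ae ((hZWpm (measurableSet_singleton _)).inter hTm) hcong]
    exact key_prod hZWpm (hYint d 0) hTm _ hInd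
  -- six a.e. congruences
  have congAT1 : ∀ᵐ ω ∂μ, ω ∈ ZWp ⁻¹' {((1:ℝ),(1:ℝ))} ∩ ATset D1 D0 → Yo ω = Y 1 0 ω := by
    filter_upwards [hexcl 1, hexcl 0] with ω e1 e0 hm
    obtain ⟨hz, -⟩ := hmemA 1 ω hm.1
    obtain ⟨h1, h0⟩ := hm.2
    rw [hYo ω, hD ω, hz, h1, h0, e1, e0]; ring
  have congNT1 : ∀ᵐ ω ∂μ, ω ∈ ZWp ⁻¹' {((1:ℝ),(1:ℝ))} ∩ NTset D1 D0 → Yo ω = Y 0 0 ω := by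
    filter_upwards [hexcl 1, hexcl 0] with ω e1 e0 hm
    obtain ⟨hz, -⟩ := hmemA 1 ω hm.1
    obtain ⟨h1, h0⟩ := hm.2
    rw [hYo ω, hD ω, hz, h1, h0, e1, e0]; ring
  have congCP1 : ∀ᵐ ω ∂μ, ω ∈ ZWp ⁻¹' {((1:ℝ),(1:ℝ))} ∩ CPset D1 D0 → Yo ω = Y 1 0 ω := by
    filter_upwards [hexcl 1, hexcl 0] with ω e1 e0 hm
    obtain ⟨hz, -⟩ := hmemA 1 ω hm.1
    obtain ⟨h1, h0⟩ := hm.2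
    rw [hYo ω, hD ω, hz, h1, h0, e1, e0]; ring
  have congAT0 : ∀ᵐ ω ∂μ, ω ∈ ZWp ⁻¹' {((0:ℝ),(1:ℝ))} ∩ ATset D1 D0 → Yo ω = Y 1 0 ω := by
    filter_upwards [hexcl 1, hexcl 0] with ω e1 e0 hm
    obtain ⟨hz, -⟩ := hmemA 0 ω hm.1
    obtain ⟨h1, h0⟩ := hm.2
    rw [hYo ω, hD ω, hz, h1, h0, e1, e0]; ring
  have congNT0 : ∀ᵐ ω ∂μ, ω ∈ ZWp ⁻¹' {((0:ℝ),(1:ℝ))} ∩ NTset D1 D0 → Yo ω = Y 0 0 ω := by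
    filter_upwards [hexcl 1, hexcl 0] with ω e1 e0 hm
    obtain ⟨hz, -⟩ := hmemA 0 ω hm.1
    obtain ⟨h1, h0⟩ := hm.2
    rw [hYo ω, hD ω, hz, h1, h0, e1, e0]; ring
  have congCP0 : ∀ᵐ ω ∂μ, ω ∈ ZWp ⁻¹' {((0:ℝ),(1:ℝ))} ∩ CPset D1 D0 → Yo ω = Y 0 0 ω := by
    filter_upwards [hexcl 1, hexcl 0] with ω e1 e0 hm
    obtain ⟨hz, -⟩ := hmemA 0 ω hm.1
    obtain ⟨h1, h0⟩ := hm.2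
    rw [hYo ω, hD ω, hz, h1, h0, e1, e0]; ring
  -- Yo pieces
  have pAT1 : ∫ ω in A1 ∩ ATset D1 D0, Yo ω ∂μ
      = cexp μ (ATset D1 D0) (Y 1 0) * (μ (A1 ∩ ATset D1 D0)).toReal := by
    rw [hA1]; exact pieceYo 1 _ hATm 1 (hCI1 1 0 1 1) congAT1
  have pNT1 : ∫ ω in A1 ∩ NTset D1 D0, Yo ω ∂μ
      = cexp μ (NTset D1 D0) (Y 0 0) * (μ (A1 ∩ NTset D1 D0)).toReal := by
    rw [hA1]; exact pieceYo 1 _ hNTm 0 (hCI1 0 0 0 0) congNT1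
  have pCP1 : ∫ ω in A1 ∩ CPset D1 D0, Yo ω ∂μ
      = cexp μ (CPset D1 D0) (Y 1 0) * (μ (A1 ∩ CPset D1 D0)).toReal := by
    rw [hA1]; exact pieceYo 1 _ hCPm 1 (hCI1 1 0 1 0) congCP1
  have pAT0 : ∫ ω in A0 ∩ ATset D1 D0, Yo ω ∂μ
      = cexp μ (ATset D1 D0) (Y 1 0) * (μ (A0 ∩ ATset D1 D0)).toReal := by
    rw [hA0]; exact pieceYo 0 _ hATm 1 (hCI1 1 0 1 1) congAT0
  have pNT0 : ∫ ω in A0 ∩ NTset D1 D0, Yo ω ∂μ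
      = cexp μ (NTset D1 D0) (Y 0 0) * (μ (A0 ∩ NTset D1 D0)).toReal := by
    rw [hA0]; exact pieceYo 0 _ hNTm 0 (hCI1 0 0 0 0) congNT0
  have pCP0 : ∫ ω in A0 ∩ CPset D1 D0, Yo ω ∂μ
      = cexp μ (CPset D1 D0) (Y 0 0) * (μ (A0 ∩ CPset D1 D0)).toReal := by
    rw [hA0]; exact pieceYo 0 _ hCPm 0 (hCI1 0 0 1 0) congCP0
  -- DF pieces are zero
  have pDFYo1 : ∫ ω in A1 ∩ DFs, Yo ω ∂μ = 0 :=
    setIntegral_measure_zero _ (measure_mono_null Set.inter_subset_right hDF0)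
  have pDFYo0 : ∫ ω in A0 ∩ DFs, Yo ω ∂μ = 0 :=
    setIntegral_measure_zero _ (measure_mono_null Set.inter_subset_right hDF0)
  have pDFD1 : ∫ ω in A1 ∩ DFs, D ω ∂μ = 0 :=
    setIntegral_measure_zero _ (measure_mono_null Set.inter_subset_right hDF0)
  have pDFD0 : ∫ ω in A0 ∩ DFs, D ω ∂μ = 0 :=
    setIntegral_measure_zero _ (measure_mono_null Set.inter_subset_right hDF0)
  -- D pieces
  have pDAT1 : ∫ ω in A1 ∩ ATset D1 D0, D ω ∂μ = (μ (A1 ∩ ATset D1 D0)).toReal := by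
    rw [setIntegral_congr_fun (hA1m.inter hATm) (g := fun _ => (1:ℝ))
      (fun ω hm => by
        obtain ⟨hz, -⟩ := hmemA 1 ω hm.1
        obtain ⟨h1, h0⟩ := hm.2
        rw [hD ω, hz, h1, h0]; ring), setIntegral_const]
    simp [measureReal_def]
  have pDNT1 : ∫ ω in A1 ∩ NTset D1 D0, D ω ∂μ = 0 := by
    rw [setIntegral_congr_fun (hA1m.inter hNTm) (g := fun _ => (0:ℝ))
      (fun ω hm => by
        obtain ⟨hz, -⟩ := hmemA 1 ω hm.1
        obtain ⟨h1, h0⟩ := hm.2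
        rw [hD ω, hz, h1, h0]; ring)]
    simp
  have pDCP1 : ∫ ω in A1 ∩ CPset D1 D0, D ω ∂μ = (μ (A1 ∩ CPset D1 D0)).toReal := by
    rw [setIntegral_congr_fun (hA1m.inter hCPm) (g := fun _ => (1:ℝ))
      (fun ω hm => by
        obtain ⟨hz, -⟩ := hmemA 1 ω hm.1
        obtain ⟨h1, h0⟩ := hm.2
        rw [hD ω, hz, h1, h0]; ring), setIntegral_const]
    simp [measureReal_def]
  have pDAT0 : ∫ ω in A0 ∩ ATset D1 D0, D ω ∂μ = (μ (A0 ∩ ATset D1 D0)).toReal := by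
    rw [setIntegral_congr_fun (hA0m.inter hATm) (g := fun _ => (1:ℝ))
      (fun ω hm => by
        obtain ⟨hz, -⟩ := hmemA 0 ω hm.1
        obtain ⟨h1, h0⟩ := hm.2
        rw [hD ω, hz, h1, h0]; ring), setIntegral_const]
    simp [measureReal_def]
  have pDNT0 : ∫ ω in A0 ∩ NTset D1 D0, D ω ∂μ = 0 := by
    rw [setIntegral_congr_fun (hA0m.inter hNTm) (g := fun _ => (0:ℝ))
      (fun ω hm => by
        obtain ⟨hz, -⟩ := hmemA 0 ω hm.1
        obtain ⟨h1, h0⟩ := hm.2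
        rw [hD ω, hz, h1, h0]; ring)]
    simp
  have pDCP0 : ∫ ω in A0 ∩ CPset D1 D0, D ω ∂μ = 0 := by
    rw [setIntegral_congr_fun (hA0m.inter hCPm) (g := fun _ => (0:ℝ))
      (fun ω hm => by
        obtain ⟨hz, -⟩ := hmemA 0 ω hm.1
        obtain ⟨h1, h0⟩ := hm.2
        rw [hD ω, hz, h1, h0]; ring)]
    simp

  -- split the integrals over the four types
  have hIYo1 : ∫ ω in A1, Yo ω ∂μ
      = cexp μ (ATset D1 D0) (Y 1 0) * (μ (A1 ∩ ATset D1 D0)).toReal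
        + cexp μ (NTset D1 D0) (Y 0 0) * (μ (A1 ∩ NTset D1 D0)).toReal
        + cexp μ (CPset D1 D0) (Y 1 0) * (μ (A1 ∩ CPset D1 D0)).toReal := by
    rw [split4 hYoi (hA1m.inter hNTm) (hA1m.inter hCPm) (hA1m.inter hDFm)
      dAN dAC dAD dNC dND dCD hcov, pAT1, pNT1, pCP1, pDFYo1]
    ring
  have hIYo0 : ∫ ω in A0, Yo ω ∂μ
      = cexp μ (ATset D1 D0) (Y 1 0) * (μ (A0 ∩ ATset D1 D0)).toReal
        + cexp μ (NTset D1 D0) (Y 0 0) * (μ (A0 ∩ NTset D1 D0)).toReal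
        + cexp μ (CPset D1 D0) (Y 0 0) * (μ (A0 ∩ CPset D1 D0)).toReal := by
    rw [split4 hYoi (hA0m.inter hNTm) (hA0m.inter hCPm) (hA0m.inter hDFm)
      dAN dAC dAD dNC dND dCD hcov, pAT0, pNT0, pCP0, pDFYo0]
    ring
  have hID1 : ∫ ω in A1, D ω ∂μ
      = (μ (A1 ∩ ATset D1 D0)).toReal + (μ (A1 ∩ CPset D1 D0)).toReal := by
    rw [split4 hDi (hA1m.inter hNTm) (hA1m.inter hCPm) (hA1m.inter hDFm)
      dAN dAC dAD dNC dND dCD hcov, pDAT1, pDNT1, pDCP1, pDFD1]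
    ring
  have hID0 : ∫ ω in A0, D ω ∂μ = (μ (A0 ∩ ATset D1 D0)).toReal := by
    rw [split4 hDi (hA0m.inter hNTm) (hA0m.inter hCPm) (hA0m.inter hDFm)
      dAN dAC dAD dNC dND dCD hcov, pDAT0, pDNT0, pDCP0, pDFD0]
    ring
  -- conditional independence of Z and the types given W = 1
  have hfrac : ∀ (Az : Set Ω) (zz : ℝ), Az = ZWp ⁻¹' {((zz:ℝ),(1:ℝ))} →
      ∀ (T : Set Ω) (q : ℝ × ℝ), T = Pp ⁻¹' {q} →
      (μ (Az ∩ T)).toReal * (μ (evEq W 1)).toReal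
        = (μ Az).toReal * (μ (T ∩ evEq W 1)).toReal := by
    rintro Az zz rfl T q rfl
    have h := cond_indep_mul hW1m hWne (hCI2 1) zz q
    have hs1 : Z ⁻¹' {zz} ∩ Pp ⁻¹' {q} ∩ evEq W 1 = ZWp ⁻¹' {((zz:ℝ),(1:ℝ))} ∩ Pp ⁻¹' {q} := by
      ext ω
      simp only [Set.mem_inter_iff, Set.mem_preimage, Set.mem_singleton_iff, evEq,
        Set.mem_setOf_eq, hZWp, Prod.ext_iff]
      try tauto
    have hs2 : Z ⁻¹' {zz} ∩ evEq W 1 = ZWp ⁻¹' {((zz:ℝ),(1:ℝ))} := by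
      ext ω
      simp only [Set.mem_inter_iff, Set.mem_preimage, Set.mem_singleton_iff, evEq,
        Set.mem_setOf_eq, hZWp, Prod.ext_iff]
      try tauto
    simp only [pr] at h
    rw [hs1, hs2] at h
    exact h
  have mAT1 := hfrac A1 1 hA1 (ATset D1 D0) ((1:ℝ),(1:ℝ)) hATpre
  have mNT1 := hfrac A1 1 hA1 (NTset D1 D0) ((0:ℝ),(0:ℝ)) hNTpre
  have mCP1 := hfrac A1 1 hA1 (CPset D1 D0) ((1:ℝ),(0:ℝ)) hCPpre
  have mAT0 := hfrac A0 0 hA0 (ATset D1 D0) ((1:ℝ),(1:ℝ)) hATpre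
  have mNT0 := hfrac A0 0 hA0 (NTset D1 D0) ((0:ℝ),(0:ℝ)) hNTpre
  have mCP0 := hfrac A0 0 hA0 (CPset D1 D0) ((1:ℝ),(0:ℝ)) hCPpre
  -- the LHS
  have hLHS : cexp μ (CPset D1 D0)
      (fun ω => (Y 1 1 ω * Z ω + Y 1 0 ω * (1 - Z ω))
        - (Y 0 1 ω * Z ω + Y 0 0 ω * (1 - Z ω)))
      = cexp μ (CPset D1 D0) (Y 1 0) - cexp μ (CPset D1 D0) (Y 0 0) := by
    have hle : ae (μ[|CPset D1 D0]) ≤ ae μ :=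
      Measure.AbsolutelyContinuous.ae_le cond_absolutelyContinuous
    have hsub : (fun ω => (Y 1 1 ω * Z ω + Y 1 0 ω * (1 - Z ω))
        - (Y 0 1 ω * Z ω + Y 0 0 ω * (1 - Z ω)))
        =ᵐ[μ[|CPset D1 D0]] fun ω => Y 1 0 ω - Y 0 0 ω := by
      filter_upwards [(hexcl 1).filter_mono hle, (hexcl 0).filter_mono hle] with ω e1 e0
      rw [e1, e0]; ring
    rw [cexp, integral_congr_ae hsub,
      integral_sub (integrable_cond (hYint 1 0) _) (integrable_cond (hYint 0 0) _)]
    rfl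
  -- assemble the conditional expectations
  have hEYo1 : cexp μ A1 Yo * (μ (evEq W 1)).toReal
      = cexp μ (ATset D1 D0) (Y 1 0) * (μ (ATset D1 D0 ∩ evEq W 1)).toReal
        + cexp μ (NTset D1 D0) (Y 0 0) * (μ (NTset D1 D0 ∩ evEq W 1)).toReal
        + cexp μ (CPset D1 D0) (Y 1 0) * (μ (CPset D1 D0 ∩ evEq W 1)).toReal := by
    rw [cexp_eq, hIYo1]
    apply mul_left_cancel₀ hr1
    field_simp
    linear_combination cexp μ (ATset D1 D0) (Y 1 0) * mAT1
      + cexp μ (NTset D1 D0) (Y 0 0) * mNT1 + cexp μ (CPset D1 D0) (Y 1 0) * mCP1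
  have hEYo0 : cexp μ A0 Yo * (μ (evEq W 1)).toReal
      = cexp μ (ATset D1 D0) (Y 1 0) * (μ (ATset D1 D0 ∩ evEq W 1)).toReal
        + cexp μ (NTset D1 D0) (Y 0 0) * (μ (NTset D1 D0 ∩ evEq W 1)).toReal
        + cexp μ (CPset D1 D0) (Y 0 0) * (μ (CPset D1 D0 ∩ evEq W 1)).toReal := by
    rw [cexp_eq, hIYo0]
    apply mul_left_cancel₀ hr0
    field_simp
    linear_combination cexp μ (ATset D1 D0) (Y 1 0) * mAT0
      + cexp μ (NTset D1 D0) (Y 0 0) * mNT0 + cexp μ (CPset D1 D0) (Y 0 0) * mCP0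
  have hED1 : cexp μ A1 D * (μ (evEq W 1)).toReal
      = (μ (ATset D1 D0 ∩ evEq W 1)).toReal + (μ (CPset D1 D0 ∩ evEq W 1)).toReal := by
    rw [cexp_eq, hID1]
    apply mul_left_cancel₀ hr1
    field_simp
    linear_combination mAT1 + mCP1
  have hED0 : cexp μ A0 D * (μ (evEq W 1)).toReal
      = (μ (ATset D1 D0 ∩ evEq W 1)).toReal := by
    rw [cexp_eq, hID0]
    apply mul_left_cancel₀ hr0
    field_simp
    linear_combination mAT0
  -- positivity of the complier share given W = 1
  have hcRpos : 0 < (μ (CPset D1 D0 ∩ evEq W 1)).toReal := by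
    have h := hCPW
    simp only [prCond, pr] at h
    rcases div_pos_iff.mp h with ⟨h1, -⟩ | ⟨-, h2⟩
    · exact h1
    · exact absurd h2 (not_lt.mpr (le_of_lt hwpos))
  have hcR : (μ (CPset D1 D0 ∩ evEq W 1)).toReal ≠ 0 := ne_of_gt hcRpos
  -- final computation
  rw [hLHS, hA1eq, hA0eq]
  have hnum : cexp μ A1 Yo - cexp μ A0 Yo
      = (cexp μ (CPset D1 D0) (Y 1 0) - cexp μ (CPset D1 D0) (Y 0 0))
        * (μ (CPset D1 D0 ∩ evEq W 1)).toReal / (μ (evEq W 1)).toReal := by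
    rw [eq_div_iff hwne]
    linear_combination hEYo1 - hEYo0
  have hden : cexp μ A1 D - cexp μ A0 D
      = (μ (CPset D1 D0 ∩ evEq W 1)).toReal / (μ (evEq W 1)).toReal := by
    rw [eq_div_iff hwne]
    linear_combination hED1 - hED0
  rw [hnum, hden]
  field_simp
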